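/- Let G_κ denote the monoid of all automorphisms φ of F₂ such that φ(a) and φ(b) are positive words and φ(κ) = κ. The map assigning to each φ ∈ G_κ the 2×2 integer matrix induced by φ on the abelianization ℤ² of F₂ (with respect to the basis given by the images of a and b) is a monoid isomorphism from G_κ onto the monoid of 2×2 integer matrices with determinant 1 and nonnegative entries; in particular it sends T̂₁ and T̂₂ to the two free generators of that matrix monoid. -/

import Mathlib

/-- The matrix `T₁` with rows `(1,1), (0,1)`. -/
def T1 : Matrix (Fin 2) (Fin 2) ℤ := !![1, 1; 0, 1]

/-- The matrix `T₂` with rows `(1,0), (1,1)`. -/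
def T2 : Matrix (Fin 2) (Fin 2) ℤ := !![1, 0; 1, 1]

/-- The free group on two generators. -/
abbrev F2 := FreeGroup (Fin 2)

/-- The first generator `a` of `F₂`. -/
def a : F2 := FreeGroup.of 0

/-- The second generator `b` of `F₂`. -/
def b : F2 := FreeGroup.of 1

/-- The commutator `κ = a·b·a⁻¹·b⁻¹`. -/
def kappa : F2 := a * b * a⁻¹ * b⁻¹

/-- The endomorphism `T̂₁` of `F₂` determined by `a ↦ a·b`, `b ↦ b`. -/
def T1hat : Monoid.End F2 := FreeGroup.lift fun i => if i = 0 then a * b else b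

/-- The endomorphism `T̂₂` of `F₂` determined by `a ↦ a`, `b ↦ b·a`. -/
def T2hat : Monoid.End F2 := FreeGroup.lift fun i => if i = 0 then a else b * a

/-- The exponent sum of the generator `i` in a word of `F₂`: the coordinate of the image
of the word in the abelianization `ℤ²` of `F₂`. -/
def expSum (i : Fin 2) : F2 →* Multiplicative ℤ :=
  FreeGroup.lift fun j => Multiplicative.ofAdd (if j = i then (1 : ℤ) else 0)

/-- The 2×2 integer matrix induced by an endomorphism of `F₂` on the abelianization `ℤ²`,
with respect to the basis given by the images of `a` and `b`: the `j`-th column consists of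
the coordinates of the image in `ℤ²` of `φ` applied to the `j`-th generator. -/
def inducedMatrix (φ : Monoid.End F2) : Matrix (Fin 2) (Fin 2) ℤ :=
  Matrix.of fun i j => Multiplicative.toAdd (expSum i (φ (FreeGroup.of j)))

/-- `G_κ`: the set of automorphisms of `F₂` sending both generators to positive words and
fixing the commutator `κ` exactly. -/
def Gkappa : Set (Monoid.End F2) :=
  {φ | Function.Bijective φ ∧
    φ a ∈ Submonoid.closure ({a, b} : Set F2) ∧
    φ b ∈ Submonoid.closure ({a, b} : Set F2) ∧
    φ kappa = kappa}

namespace Aux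

def pw (l : List (Fin 2)) : List (Fin 2 × Bool) := l.map fun x => (x, true)
def nw (l : List (Fin 2)) : List (Fin 2 × Bool) := l.map fun x => (x, false)
def pos (l : List (Fin 2)) : F2 := FreeGroup.mk (pw l)

@[simp] lemma pw_nil : pw [] = [] := rfl
@[simp] lemma pw_cons (x l) : pw (x :: l) = (x, true) :: pw l := rfl
@[simp] lemma pw_append (l1 l2) : pw (l1 ++ l2) = pw l1 ++ pw l2 := List.map_append ..
@[simp] lemma nw_nil : nw [] = [] := rfl
@[simp] lemma nw_cons (x l) : nw (x :: l) = (x, false) :: nw l := rfl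

@[simp] lemma pos_append (l1 l2) : pos (l1 ++ l2) = pos l1 * pos l2 := by
  simp [pos, FreeGroup.mul_mk]

@[simp] lemma pos_nil : pos [] = 1 := FreeGroup.one_eq_mk.symm
lemma a_eq : a = pos [0] := rfl
lemma b_eq : b = pos [1] := rfl
lemma pos_single (x : Fin 2) : pos [x] = FreeGroup.of x := rfl

def Reduced (L : List (Fin 2 × Bool)) : Prop :=
  List.Chain' (fun p q => ¬(p.1 = q.1 ∧ p.2 = !q.2)) L

lemma reduce_eq_self {L : List (Fin 2 × Bool)} (h : Reduced L) : FreeGroup.reduce L = L := by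
  induction L with
  | nil => rfl
  | cons x L ih =>
    have hr := ih h.tail
    cases L with
    | nil => rfl
    | cons y t =>
      have hxy : ¬(x.1 = y.1 ∧ x.2 = !y.2) := (List.isChain_cons_cons.mp h).1
      rw [FreeGroup.reduce.cons, hr]
      simp only [if_neg hxy]

lemma mk_inj {L1 L2 : List (Fin 2 × Bool)} (h1 : Reduced L1) (h2 : Reduced L2)
    (h : FreeGroup.mk L1 = FreeGroup.mk L2) : L1 = L2 := by
  have := congrArg FreeGroup.toWord h
  rwa [FreeGroup.toWord_mk, FreeGroup.toWord_mk, reduce_eq_self h1, reduce_eq_self h2] at this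

lemma reduced_pw (l : List (Fin 2)) : Reduced (pw l) := by
  induction l with
  | nil => exact List.isChain_nil
  | cons x l ih =>
    cases l with
    | nil => simp [Reduced, List.Chain']
    | cons y t => exact List.isChain_cons_cons.mpr ⟨by simp, ih⟩

lemma reduced_nw (l : List (Fin 2)) : Reduced (nw l) := by
  induction l with
  | nil => exact List.isChain_nil
  | cons x l ih =>
    cases l with
    | nil => simp [Reduced, List.Chain']
    | cons y t => exact List.isChain_cons_cons.mpr ⟨by simp, ih⟩

lemma toWord_pos (l : List (Fin 2)) : (pos l).toWord = pw l := by
  rw [pos, FreeGroup.toWord_mk, reduce_eq_self (reduced_pw l)]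

lemma pos_inj {l1 l2 : List (Fin 2)} (h : pos l1 = pos l2) : l1 = l2 := by
  have := mk_inj (reduced_pw l1) (reduced_pw l2) h
  exact List.map_injective_iff.mpr (fun x y hxy => by
    simpa using congrArg Prod.fst hxy) this

lemma invRev_pw (l : List (Fin 2)) : FreeGroup.invRev (pw l) = nw l.reverse := by
  simp [FreeGroup.invRev, pw, nw, List.map_reverse, List.map_map, Function.comp_def]

lemma pos_inv (l : List (Fin 2)) : (pos l)⁻¹ = FreeGroup.mk (nw l.reverse) := by
  rw [pos, FreeGroup.inv_mk, invRev_pw]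

def kword : List (Fin 2 × Bool) := [(0,true),(1,true),(0,false),(1,false)]

lemma reduced_kword : Reduced kword := by simp [Reduced, kword, List.Chain']

lemma kappa_eq : kappa = FreeGroup.mk kword := by
  have h1 : pos [0,1] * (pos [1,0])⁻¹ = FreeGroup.mk kword := by
    rw [pos_inv, pos, FreeGroup.mul_mk]; rfl
  rw [← h1, kappa, a_eq, b_eq]
  have h2 : pos [0,1] = pos [0] * pos [1] := pos_append [0] [1]
  have h3 : pos [1,0] = pos [1] * pos [0] := pos_append [1] [0]
  rw [h2, h3]
  group

lemma cancel (B : List (Fin 2)) : ∀ A : List (Fin 2),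
    pos A * (pos B)⁻¹ = kappa → ∃ s, A = 0::1::s ∧ B = 1::0::s := by
  induction B using List.reverseRecOn with
  | nil =>
    intro A h
    rw [pos_nil] at h
    simp only [inv_one, mul_one, kappa_eq] at h
    have := mk_inj (reduced_pw A) reduced_kword h
    have hm : ((0 : Fin 2), false) ∈ pw A := by rw [this]; simp [kword]
    simp [pw] at hm
  | append_singleton B' y ih =>
    intro A h
    rcases A.eq_nil_or_concat with rfl | ⟨A', x, rfl⟩
    · rw [pos_nil, one_mul, pos_inv, kappa_eq] at h
      have := mk_inj (reduced_nw _) reduced_kword h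
      have hm : ((0 : Fin 2), true) ∈ nw (B' ++ [y]).reverse := by rw [this]; simp [kword]
      simp [nw] at hm
    · simp only [List.concat_eq_append] at h ⊢
      by_cases hxy : x = y
      · subst hxy
        have h' : pos A' * (pos B')⁻¹ = kappa := by
          rw [pos_append, pos_append] at h
          rw [← h]; group
        obtain ⟨s, hA, hB⟩ := ih A' h'
        exact ⟨s ++ [x], by simp [hA], by simp [hB]⟩
      · have hrev : (B' ++ [y]).reverse = y :: B'.reverse := by simp
        have hW : pos (A' ++ [x]) * (pos (B' ++ [y]))⁻¹
            = FreeGroup.mk (pw (A' ++ [x]) ++ nw (y :: B'.reverse)) := by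
          rw [pos_inv, hrev, pos, FreeGroup.mul_mk]
        have hred : Reduced (pw (A' ++ [x]) ++ nw (y :: B'.reverse)) := by
          apply List.IsChain.append (reduced_pw _) (reduced_nw _)
          intro p hp q hq
          simp only [pw_append, pw_cons, pw_nil, List.getLast?_concat, Option.mem_some_iff] at hp
          simp only [nw_cons, List.head?_cons, Option.mem_some_iff] at hq
          subst hp hq
          simp [hxy]
        have hWk : pw (A' ++ [x]) ++ nw (y :: B'.reverse) = kword := by
          apply mk_inj hred reduced_kword
          rw [← hW, h, kappa_eq]
        rcases A' with _ | ⟨x0, _ | ⟨x1, _ | ⟨x2, A''⟩⟩⟩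
        · simp [kword] at hWk
        · simp only [pw_append, pw_cons, pw_nil, nw_cons, kword, List.cons_append,
            List.nil_append, List.cons.injEq, Prod.mk.injEq] at hWk
          obtain ⟨⟨h1, -⟩, ⟨h2, -⟩, ⟨h3, -⟩, htail⟩ := hWk
          have hB' : B'.reverse = [1] := by
            cases hc : B'.reverse with
            | nil => rw [hc] at htail; simp at htail
            | cons c t =>
              rw [hc] at htail
              cases t with
              | nil =>
                simp only [nw_cons, nw_nil, List.cons.injEq, Prod.mk.injEq] at htail
                rw [htail.1.1]
              | cons d t' => simp at htail
          have hB'' : B' = [1] := by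
            have := congrArg List.reverse hB'; simpa using this
          exact ⟨[], by simp [h1, h2], by simp [hB'', h3]⟩
        · exfalso; simp [kword] at hWk
        · exfalso; simp [kword] at hWk


lemma helper {p q u v : List (Fin 2)} (h : p ++ u = q ++ v) (hl : q.length ≤ p.length) :
    v = p.drop q.length ++ u := by
  have hk : p.length = q.length + (p.length - q.length) := by omega
  have hd := congrArg (List.drop p.length) h
  rw [List.drop_left] at hd
  rw [hk, List.drop_length_add_append] at hd
  have ht := congrArg (List.take p.length) h
  rw [List.take_left] at ht
  rw [hk, List.take_length_add_append] at ht
  have hpd : p.drop q.length = v.take (p.length - q.length) := by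
    rw [ht]; simp
  rw [hpd, hd]
  exact (List.take_append_drop _ v).symm

lemma rep_lemma {l : List (Fin 2)} {x : Fin 2} (h : l ++ [x] = x :: l) :
    l = List.replicate l.length x := by
  induction l with
  | nil => rfl
  | cons c t ih =>
    simp only [List.cons_append, List.cons.injEq] at h
    obtain ⟨rfl, h⟩ := h
    rw [List.length_cons, List.replicate_succ, ← ih h]

lemma SB {s u v : List (Fin 2)} (h1 : u ++ v = 0::1::s) (h2 : v ++ u = 1::0::s) :
    (u = [0] ∧ v = [1]) ∨ (∃ w, w ≠ [] ∧ u = w ++ v) ∨ (∃ w, w ≠ [] ∧ v = w ++ u) := by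
  cases u with
  | nil =>
    exfalso
    simp only [List.nil_append] at h1
    simp only [List.append_nil] at h2
    rw [h1] at h2
    simp at h2
  | cons x u' =>
  cases v with
  | nil =>
    exfalso
    simp only [List.nil_append] at h2
    simp only [List.append_nil] at h1
    rw [h1] at h2
    simp at h2
  | cons y v' =>
  simp only [List.cons_append, List.cons.injEq] at h1 h2
  obtain ⟨rfl, h1⟩ := h1
  obtain ⟨rfl, h2⟩ := h2
  cases u' with
  | nil =>
    -- u = [0], v = 1 :: v', h1 : 1::v' = 1::s, h2 : v' ++ [0] = 0 :: s
    simp only [List.nil_append, List.cons.injEq] at h1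
    obtain ⟨-, rfl⟩ := h1
    have hv := rep_lemma h2
    cases v' with
    | nil => exact Or.inl ⟨rfl, rfl⟩
    | cons c t =>
      refine Or.inr (Or.inr ⟨1 :: List.replicate t.length 0, by simp, ?_⟩)
      rw [hv]
      simp only [List.length_cons, List.replicate_succ]
      have h0 : (0:Fin 2) :: List.replicate t.length 0 = List.replicate t.length 0 ++ [0] := by
        rw [← List.replicate_succ, ← List.replicate_succ']
      rw [h0]
      simp
  | cons z u'' =>
    -- h1 : (z :: u'') ++ 1 :: v' = 1 :: s
    simp only [List.cons_append, List.cons.injEq] at h1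
    obtain ⟨rfl, h1⟩ := h1
    cases v' with
    | nil =>
      -- v = [1], h2 : [] ++ (0 :: 1 :: u'') = 0 :: s, i.e. 1 :: u'' = s
      simp only [List.nil_append, List.cons.injEq] at h2
      obtain ⟨-, rfl⟩ := h2
      -- h1 : u'' ++ [1] = 1 :: u''
      have hu := rep_lemma h1
      refine Or.inr (Or.inl ⟨0 :: List.replicate u''.length 1, by simp, ?_⟩)
      conv_lhs => rw [hu]
      have h0 : (1:Fin 2) :: List.replicate u''.length 1 = List.replicate u''.length 1 ++ [1] := by
        rw [← List.replicate_succ, ← List.replicate_succ']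
      rw [h0]
      simp
    | cons t v'' =>
      simp only [List.cons_append, List.cons.injEq] at h2
      obtain ⟨rfl, h2⟩ := h2
      have key : u'' ++ (1::0::v'') = v'' ++ (0::1::u'') := by rw [h1, h2]
      rcases le_total u''.length v''.length with hle | hle
      · have hv := helper key.symm hle
        rcases eq_or_ne (v''.drop u''.length) [] with he | he
        · rw [he, List.nil_append] at hv
          exfalso
          simp only [List.cons.injEq] at hv
          exact absurd hv.1 (by decide)
        · exact Or.inr (Or.inr ⟨_, he, hv⟩)
      · have hu := helper key hle
        rcases eq_or_ne (u''.drop v''.length) [] with he | he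
        · rw [he, List.nil_append] at hu
          exfalso
          simp only [List.cons.injEq] at hu
          exact absurd hu.1 (by decide)
        · exact Or.inr (Or.inl ⟨_, he, hu⟩)


def T1inv : Monoid.End F2 := FreeGroup.lift fun i => if i = 0 then a * b⁻¹ else b
def T2inv : Monoid.End F2 := FreeGroup.lift fun i => if i = 0 then a else b * a⁻¹

@[simp] lemma T1hat_a : T1hat a = a * b := by rw [T1hat, a]; erw [FreeGroup.lift_apply_of]; norm_num
@[simp] lemma T1hat_b : T1hat b = b := by rw [T1hat, b]; erw [FreeGroup.lift_apply_of]; norm_num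
@[simp] lemma T2hat_a : T2hat a = a := by rw [T2hat, a]; erw [FreeGroup.lift_apply_of]; norm_num
@[simp] lemma T2hat_b : T2hat b = b * a := by rw [T2hat, b]; erw [FreeGroup.lift_apply_of]; norm_num
@[simp] lemma T1inv_a : T1inv a = a * b⁻¹ := by rw [T1inv, a]; erw [FreeGroup.lift_apply_of]; norm_num
@[simp] lemma T1inv_b : T1inv b = b := by rw [T1inv, b]; erw [FreeGroup.lift_apply_of]; norm_num
@[simp] lemma T2inv_a : T2inv a = a := by rw [T2inv, a]; erw [FreeGroup.lift_apply_of]; norm_num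
@[simp] lemma T2inv_b : T2inv b = b * a⁻¹ := by rw [T2inv, b]; erw [FreeGroup.lift_apply_of]; norm_num

lemma endo_ext {f g : Monoid.End F2} (h0 : f a = g a) (h1 : f b = g b) : f = g := by
  apply FreeGroup.ext_hom
  intro i
  fin_cases i
  · exact h0
  · exact h1

@[simp] lemma one_apply (x : F2) : (1 : Monoid.End F2) x = x := rfl
@[simp] lemma mul_apply (f g : Monoid.End F2) (x : F2) : (f * g) x = f (g x) := rfl

lemma T1_comp_inv : T1hat * T1inv = 1 := by
  apply endo_ext <;> simp
lemma T1_inv_comp : T1inv * T1hat = 1 := by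
  apply endo_ext <;> simp
lemma T2_comp_inv : T2hat * T2inv = 1 := by
  apply endo_ext <;> simp
lemma T2_inv_comp : T2inv * T2hat = 1 := by
  apply endo_ext <;> simp

lemma bij_of_inv {f g : Monoid.End F2} (h1 : f * g = 1) (h2 : g * f = 1) :
    Function.Bijective f := by
  refine Function.bijective_iff_has_inverse.mpr ⟨g, fun x => ?_, fun x => ?_⟩
  · exact DFunLike.congr_fun h2 x
  · exact DFunLike.congr_fun h1 x

lemma T1hat_bij : Function.Bijective T1hat := bij_of_inv T1_comp_inv T1_inv_comp
lemma T2hat_bij : Function.Bijective T2hat := bij_of_inv T2_comp_inv T2_inv_comp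
lemma T1inv_bij : Function.Bijective T1inv := bij_of_inv T1_inv_comp T1_comp_inv
lemma T2inv_bij : Function.Bijective T2inv := bij_of_inv T2_inv_comp T2_comp_inv

lemma T1inv_kappa : T1inv kappa = kappa := by
  simp only [kappa, map_mul, map_inv, T1inv_a, T1inv_b]
  group
lemma T2inv_kappa : T2inv kappa = kappa := by
  simp only [kappa, map_mul, map_inv, T2inv_a, T2inv_b]
  group
lemma T1hat_kappa : T1hat kappa = kappa := by
  simp only [kappa, map_mul, map_inv, T1hat_a, T1hat_b]
  group
lemma T2hat_kappa : T2hat kappa = kappa := by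
  simp only [kappa, map_mul, map_inv, T2hat_a, T2hat_b]
  group

lemma a_mem : a ∈ Submonoid.closure ({a, b} : Set F2) :=
  Submonoid.subset_closure (by simp)
lemma b_mem : b ∈ Submonoid.closure ({a, b} : Set F2) :=
  Submonoid.subset_closure (by simp)

lemma T1hat_mem : T1hat ∈ Gkappa :=
  ⟨T1hat_bij, by simpa using mul_mem a_mem b_mem, by simpa using b_mem, T1hat_kappa⟩
lemma T2hat_mem : T2hat ∈ Gkappa :=
  ⟨T2hat_bij, by simpa using a_mem, by simpa using mul_mem b_mem a_mem, T2hat_kappa⟩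
lemma one_mem_G : (1 : Monoid.End F2) ∈ Gkappa :=
  ⟨Function.bijective_id, by simpa using a_mem, by simpa using b_mem, rfl⟩


lemma pos_cons (x : Fin 2) (l) : pos (x :: l) = FreeGroup.of x * pos l := by
  rw [show x :: l = [x] ++ l from rfl, pos_append, pos_single]

lemma len_pos (l : List (Fin 2)) : (pos l).toWord.length = l.length := by
  rw [toWord_pos]; simp [pw]

lemma mem_closure_iff {x : F2} :
    x ∈ Submonoid.closure ({a, b} : Set F2) ↔ ∃ l, pos l = x := by
  constructor
  · intro hx
    induction hx using Submonoid.closure_induction with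
    | mem y hy =>
      rcases hy with rfl | rfl
      · exact ⟨[0], rfl⟩
      · exact ⟨[1], rfl⟩
    | one => exact ⟨[], pos_nil⟩
    | mul x y _ _ ihx ihy =>
      obtain ⟨l1, rfl⟩ := ihx
      obtain ⟨l2, rfl⟩ := ihy
      exact ⟨l1 ++ l2, pos_append l1 l2⟩
  · rintro ⟨l, rfl⟩
    induction l with
    | nil => rw [pos_nil]; exact one_mem _
    | cons x t ih =>
      rw [pos_cons]
      refine mul_mem ?_ ih
      fin_cases x
      · exact a_mem
      · exact b_mem

lemma phi_pos_mem {φ : Monoid.End F2} (hφ : φ ∈ Gkappa) {x : F2}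
    (hx : x ∈ Submonoid.closure ({a, b} : Set F2)) :
    φ x ∈ Submonoid.closure ({a, b} : Set F2) := by
  induction hx using Submonoid.closure_induction with
  | mem y hy =>
    rcases hy with rfl | rfl
    · exact hφ.2.1
    · exact hφ.2.2.1
  | one => rw [map_one]; exact one_mem _
  | mul x y _ _ ihx ihy => rw [map_mul]; exact mul_mem ihx ihy

lemma Gmul {φ ψ : Monoid.End F2} (hφ : φ ∈ Gkappa) (hψ : ψ ∈ Gkappa) : φ * ψ ∈ Gkappa := by
  refine ⟨hφ.1.comp hψ.1, phi_pos_mem hφ hψ.2.1, phi_pos_mem hφ hψ.2.2.1, ?_⟩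
  show φ (ψ kappa) = kappa
  rw [hψ.2.2.2, hφ.2.2.2]

def len (φ : Monoid.End F2) : ℕ := (φ a).toWord.length + (φ b).toWord.length

lemma slem {φ : Monoid.End F2} (hφ : φ ∈ Gkappa) :
    φ = 1 ∨ (∃ ψ ∈ Gkappa, φ = ψ * T1hat ∧ len ψ < len φ) ∨
      (∃ ψ ∈ Gkappa, φ = ψ * T2hat ∧ len ψ < len φ) := by
  obtain ⟨u, hu⟩ := mem_closure_iff.mp hφ.2.1
  obtain ⟨v, hv⟩ := mem_closure_iff.mp hφ.2.2.1
  have hk : pos (u ++ v) * (pos (v ++ u))⁻¹ = kappa := by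
    have hh := hφ.2.2.2
    rw [kappa] at hh ⊢
    simp only [map_mul, map_inv, ← hu, ← hv] at hh
    rw [pos_append, pos_append, ← hh]
    group
  obtain ⟨s, h1, h2⟩ := cancel (v ++ u) (u ++ v) hk
  have hvne : v ≠ [] := by
    rintro rfl
    rw [List.append_nil] at h1
    rw [List.nil_append] at h2
    rw [h1] at h2
    simp at h2
  have hune : u ≠ [] := by
    rintro rfl
    rw [List.nil_append] at h1
    rw [List.append_nil] at h2
    rw [h1] at h2
    simp at h2
  rcases SB h1 h2 with ⟨hu0, hv0⟩ | ⟨w, hw, huw⟩ | ⟨w, hw, hvw⟩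
  · left
    refine endo_ext ?_ ?_ <;> rw [one_apply]
    · rw [← hu, hu0]; rfl
    · rw [← hv, hv0]; rfl
  · refine Or.inr (Or.inl ⟨φ * T1inv, ⟨?_, ?_, ?_, ?_⟩, ?_, ?_⟩)
    · exact hφ.1.comp T1inv_bij
    · refine mem_closure_iff.mpr ⟨w, ?_⟩
      show pos w = φ (T1inv a)
      rw [T1inv_a, map_mul, map_inv, ← hu, ← hv, huw, pos_append]
      group
    · refine mem_closure_iff.mpr ⟨v, ?_⟩
      show pos v = φ (T1inv b)
      rw [T1inv_b, hv]
    · show φ (T1inv kappa) = kappa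
      rw [T1inv_kappa, hφ.2.2.2]
    · rw [mul_assoc, T1_inv_comp, mul_one]
    · have e1 : (φ * T1inv) a = pos w := by
        show φ (T1inv a) = pos w
        rw [T1inv_a, map_mul, map_inv, ← hu, ← hv, huw, pos_append]
        group
      have e2 : (φ * T1inv) b = pos v := by
        show φ (T1inv b) = pos v
        rw [T1inv_b, hv]
      have hul : u.length = w.length + v.length := by rw [huw]; simp
      have hvp : 0 < v.length := List.length_pos_iff.mpr hvne
      simp only [len, e1, e2, ← hu, ← hv, len_pos]
      omega
  · refine Or.inr (Or.inr ⟨φ * T2inv, ⟨?_, ?_, ?_, ?_⟩, ?_, ?_⟩)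
    · exact hφ.1.comp T2inv_bij
    · refine mem_closure_iff.mpr ⟨u, ?_⟩
      show pos u = φ (T2inv a)
      rw [T2inv_a, hu]
    · refine mem_closure_iff.mpr ⟨w, ?_⟩
      show pos w = φ (T2inv b)
      rw [T2inv_b, map_mul, map_inv, ← hu, ← hv, hvw, pos_append]
      group
    · show φ (T2inv kappa) = kappa
      rw [T2inv_kappa, hφ.2.2.2]
    · rw [mul_assoc, T2_inv_comp, mul_one]
    · have e1 : (φ * T2inv) a = pos u := by
        show φ (T2inv a) = pos u
        rw [T2inv_a, hu]
      have e2 : (φ * T2inv) b = pos w := by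
        show φ (T2inv b) = pos w
        rw [T2inv_b, map_mul, map_inv, ← hu, ← hv, hvw, pos_append]
        group
      have hvl : v.length = w.length + u.length := by rw [hvw]; simp
      have hup : 0 < u.length := List.length_pos_iff.mpr hune
      simp only [len, e1, e2, ← hu, ← hv, len_pos]
      omega

lemma G_sub_closure_aux : ∀ n (φ : Monoid.End F2), φ ∈ Gkappa → len φ = n →
    φ ∈ Submonoid.closure ({T1hat, T2hat} : Set (Monoid.End F2)) := by
  intro n
  induction n using Nat.strong_induction_on with
  | _ n ih =>
  rintro φ hφ rfl
  rcases slem hφ with rfl | ⟨ψ, hψ, rfl, hlt⟩ | ⟨ψ, hψ, rfl, hlt⟩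
  · exact one_mem _
  · exact mul_mem (ih _ hlt ψ hψ rfl) (Submonoid.subset_closure (by simp))
  · exact mul_mem (ih _ hlt ψ hψ rfl) (Submonoid.subset_closure (by simp))

lemma G_eq_closure : Gkappa = (Submonoid.closure ({T1hat, T2hat} : Set (Monoid.End F2)) : Set (Monoid.End F2)) := by
  ext φ
  constructor
  · intro hφ
    exact G_sub_closure_aux (len φ) φ hφ rfl
  · intro hφ
    induction hφ using Submonoid.closure_induction with
    | mem y hy =>
      rcases hy with rfl | rfl
      · exact T1hat_mem
      · exact T2hat_mem
    | one => exact one_mem_G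
    | mul x y _ _ ihx ihy => exact Gmul ihx ihy

def esum (i : Fin 2) (x : F2) : ℤ := Multiplicative.toAdd (expSum i x)

lemma esum_of (i j : Fin 2) : esum i (FreeGroup.of j) = if j = i then 1 else 0 := by
  rw [esum, expSum, FreeGroup.lift_apply_of]
  rfl

@[simp] lemma esum_one (i : Fin 2) : esum i 1 = 0 := by
  rw [esum, map_one]; rfl

@[simp] lemma esum_mul (i : Fin 2) (x y : F2) : esum i (x * y) = esum i x + esum i y := by
  rw [esum, map_mul]; rfl

@[simp] lemma esum_inv (i : Fin 2) (x : F2) : esum i x⁻¹ = - esum i x := by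
  rw [esum, map_inv]; rfl

lemma ind_apply (φ : Monoid.End F2) (i j : Fin 2) :
    inducedMatrix φ i j = esum i (φ (FreeGroup.of j)) := rfl

lemma esum_phi (φ : Monoid.End F2) (i : Fin 2) (x : F2) :
    esum i (φ x) = inducedMatrix φ i 0 * esum 0 x + inducedMatrix φ i 1 * esum 1 x := by
  induction x using FreeGroup.induction_on with
  | C1 => simp [map_one]
  | of j =>
    rw [esum_of]
    fin_cases j <;> simp [esum_of, ind_apply]
  | inv_of j ihj =>
    rw [map_inv, esum_inv, esum_inv, esum_inv, ihj]
    ring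
  | mul x y ihx ihy =>
    rw [map_mul, esum_mul, esum_mul, esum_mul, ihx, ihy]
    ring

lemma ind_one : inducedMatrix 1 = 1 := by
  ext i j
  rw [ind_apply, one_apply, esum_of, Matrix.one_apply]
  fin_cases i <;> fin_cases j <;> norm_num

lemma ind_mul (φ ψ : Monoid.End F2) :
    inducedMatrix (φ * ψ) = inducedMatrix φ * inducedMatrix ψ := by
  ext i j
  rw [Matrix.mul_apply, Fin.sum_univ_two, ind_apply, mul_apply, esum_phi,
    ← ind_apply, ← ind_apply]

def imh : Monoid.End F2 →* Matrix (Fin 2) (Fin 2) ℤ where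
  toFun := inducedMatrix
  map_one' := ind_one
  map_mul' := ind_mul

lemma a_of : FreeGroup.of (0 : Fin 2) = a := rfl
lemma b_of : FreeGroup.of (1 : Fin 2) = b := rfl

@[simp] lemma esum_a (i : Fin 2) : esum i a = if (0 : Fin 2) = i then 1 else 0 := by
  rw [← a_of, esum_of]
@[simp] lemma esum_b (i : Fin 2) : esum i b = if (1 : Fin 2) = i then 1 else 0 := by
  rw [← b_of, esum_of]

lemma ind_T1hat : inducedMatrix T1hat = !![1, 0; 1, 1] := by
  ext i j
  fin_cases i <;> fin_cases j <;>
    simp [ind_apply, a_of, b_of, esum_mul]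

lemma ind_T2hat : inducedMatrix T2hat = !![1, 1; 0, 1] := by
  ext i j
  fin_cases i <;> fin_cases j <;>
    simp [ind_apply, a_of, b_of, esum_mul]

lemma T1_mul (w x y z : ℤ) : T1 * !![w, x; y, z] = !![w + y, x + z; y, z] := by
  ext i j
  fin_cases i <;> fin_cases j <;>
    simp [T1, Matrix.mul_apply, Fin.sum_univ_two]

lemma T2_mul (w x y z : ℤ) : T2 * !![w, x; y, z] = !![w, x; w + y, x + z] := by
  ext i j
  fin_cases i <;> fin_cases j <;>
    simp [T2, Matrix.mul_apply, Fin.sum_univ_two]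

lemma mat_descent : ∀ (n : ℕ) (M : Matrix (Fin 2) (Fin 2) ℤ), M.det = 1 → (∀ i j, 0 ≤ M i j) →
    (M 0 0 + M 0 1 + M 1 0 + M 1 1).toNat = n →
    M ∈ Submonoid.closure ({T1, T2} : Set (Matrix (Fin 2) (Fin 2) ℤ)) := by
  intro n
  induction n using Nat.strong_induction_on with
  | _ n ih =>
  intro M hdet hnn hsum
  have hd : M 0 0 * M 1 1 - M 0 1 * M 1 0 = 1 := by rw [← Matrix.det_fin_two]; exact hdet
  have h00 := hnn 0 0
  have h01 := hnn 0 1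
  have h10 := hnn 1 0
  have h11 := hnn 1 1
  by_cases hA : M 1 0 ≤ M 0 0 ∧ M 1 1 ≤ M 0 1
  · -- M = T1 * M'
    have hM : M = T1 * !![M 0 0 - M 1 0, M 0 1 - M 1 1; M 1 0, M 1 1] := by
      rw [T1_mul]
      conv_lhs => rw [Matrix.eta_fin_two M]
      congr 1 <;> ring_nf
    have hd' : (!![M 0 0 - M 1 0, M 0 1 - M 1 1; M 1 0, M 1 1]).det = 1 := by
      rw [Matrix.det_fin_two_of]; linarith [hd]
    have hnn' : ∀ i j, (0:ℤ) ≤ !![M 0 0 - M 1 0, M 0 1 - M 1 1; M 1 0, M 1 1] i j := by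
      intro i j
      fin_cases i <;> fin_cases j <;> simp <;> linarith [hA.1, hA.2]
    have hrs : ¬(M 1 0 = 0 ∧ M 1 1 = 0) := by
      rintro ⟨e1, e2⟩
      rw [e1, e2] at hd
      simp at hd
    have hlt : (!![M 0 0 - M 1 0, M 0 1 - M 1 1; M 1 0, M 1 1] 0 0
        + !![M 0 0 - M 1 0, M 0 1 - M 1 1; M 1 0, M 1 1] 0 1
        + !![M 0 0 - M 1 0, M 0 1 - M 1 1; M 1 0, M 1 1] 1 0
        + !![M 0 0 - M 1 0, M 0 1 - M 1 1; M 1 0, M 1 1] 1 1).toNat < n := by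
      simp only [Matrix.cons_val', Matrix.cons_val_zero, Matrix.cons_val_one, Matrix.head_cons,
        Matrix.empty_val', Matrix.cons_val_fin_one, Matrix.head_fin_const, Matrix.of_apply]
      omega
    rw [hM]
    exact mul_mem (Submonoid.subset_closure (by simp)) (ih _ hlt _ hd' hnn' rfl)
  · by_cases hB : M 0 0 ≤ M 1 0 ∧ M 0 1 ≤ M 1 1
    · have hM : M = T2 * !![M 0 0, M 0 1; M 1 0 - M 0 0, M 1 1 - M 0 1] := by
        rw [T2_mul]
        conv_lhs => rw [Matrix.eta_fin_two M]
        congr 1 <;> ring_nf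
      have hd' : (!![M 0 0, M 0 1; M 1 0 - M 0 0, M 1 1 - M 0 1]).det = 1 := by
        rw [Matrix.det_fin_two_of]; linarith [hd]
      have hnn' : ∀ i j, (0:ℤ) ≤ !![M 0 0, M 0 1; M 1 0 - M 0 0, M 1 1 - M 0 1] i j := by
        intro i j
        fin_cases i <;> fin_cases j <;> simp <;> linarith [hB.1, hB.2]
      have hpq : ¬(M 0 0 = 0 ∧ M 0 1 = 0) := by
        rintro ⟨e1, e2⟩
        rw [e1, e2] at hd
        simp at hd
      have hlt : (!![M 0 0, M 0 1; M 1 0 - M 0 0, M 1 1 - M 0 1] 0 0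
          + !![M 0 0, M 0 1; M 1 0 - M 0 0, M 1 1 - M 0 1] 0 1
          + !![M 0 0, M 0 1; M 1 0 - M 0 0, M 1 1 - M 0 1] 1 0
          + !![M 0 0, M 0 1; M 1 0 - M 0 0, M 1 1 - M 0 1] 1 1).toNat < n := by
        simp only [Matrix.cons_val', Matrix.cons_val_zero, Matrix.cons_val_one, Matrix.head_cons,
          Matrix.empty_val', Matrix.cons_val_fin_one, Matrix.head_fin_const, Matrix.of_apply]
        omega
      rw [hM]
      exact mul_mem (Submonoid.subset_closure (by simp)) (ih _ hlt _ hd' hnn' rfl)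
    · push_neg at hA hB
      rcases lt_or_ge (M 0 0) (M 1 0) with h1 | h1
      · have h2 : M 1 1 < M 0 1 := hB h1.le
        exfalso
        nlinarith [hd, h00, h01, h10, h11]
      · have h2 : M 0 1 < M 1 1 := hA h1
        have h3 : M 1 0 < M 0 0 := by
          rcases lt_or_ge (M 1 0) (M 0 0) with h4 | h4
          · exact h4
          · exact absurd (hB (le_antisymm h1 h4).ge) (by omega)
        have key : M 0 1 + M 1 0 ≤ 0 := by nlinarith [hd]
        have hq : M 0 1 = 0 := by omega
        have hr : M 1 0 = 0 := by omega
        have hps : M 0 0 * M 1 1 = 1 := by rw [hq, hr] at hd; linarith [hd]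
        have hp : M 0 0 = 1 := by nlinarith [hps]
        have hs : M 1 1 = 1 := by nlinarith [hps]
        have : M = 1 := by
          rw [Matrix.eta_fin_two M, hp, hq, hr, hs, ← Matrix.one_fin_two]
        rw [this]
        exact one_mem _

lemma mul_T2m (P : Matrix (Fin 2) (Fin 2) ℤ) :
    P * !![1, 0; 1, 1] = !![P 0 0 + P 0 1, P 0 1; P 1 0 + P 1 1, P 1 1] := by
  ext i j
  fin_cases i <;> fin_cases j <;>
    simp [Matrix.mul_apply, Fin.sum_univ_two]

lemma mul_T1m (P : Matrix (Fin 2) (Fin 2) ℤ) :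
    P * !![1, 1; 0, 1] = !![P 0 0, P 0 0 + P 0 1; P 1 0, P 1 0 + P 1 1] := by
  ext i j
  fin_cases i <;> fin_cases j <;>
    simp [Matrix.mul_apply, Fin.sum_univ_two]

lemma entry_eq {A B : Matrix (Fin 2) (Fin 2) ℤ} (h : A = B) (i j : Fin 2) : A i j = B i j := by
  rw [h]

lemma lit_entries (w x y z : ℤ) :
    !![w, x; y, z] 0 0 = w ∧ !![w, x; y, z] 0 1 = x ∧
    !![w, x; y, z] 1 0 = y ∧ !![w, x; y, z] 1 1 = z := by
  norm_num

lemma imh_mem_closure {χ : Monoid.End F2} (hχ : χ ∈ Gkappa) :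
    inducedMatrix χ ∈ Submonoid.closure ({T1, T2} : Set (Matrix (Fin 2) (Fin 2) ℤ)) := by
  rw [G_eq_closure] at hχ
  induction hχ using Submonoid.closure_induction with
  | mem y hy =>
    rcases hy with rfl | rfl
    · rw [ind_T1hat]
      exact Submonoid.subset_closure (by right; rfl)
    · rw [ind_T2hat]
      exact Submonoid.subset_closure (by left; rfl)
  | one => rw [ind_one]; exact one_mem _
  | mul x y _ _ ihx ihy => rw [ind_mul]; exact mul_mem ihx ihy

lemma closure_sub_DS {M : Matrix (Fin 2) (Fin 2) ℤ}
    (hM : M ∈ Submonoid.closure ({T1, T2} : Set (Matrix (Fin 2) (Fin 2) ℤ))) :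
    M.det = 1 ∧ ∀ i j, 0 ≤ M i j := by
  induction hM using Submonoid.closure_induction with
  | mem y hy =>
    rcases hy with rfl | rfl <;>
      refine ⟨by norm_num [T1, T2, Matrix.det_fin_two_of], fun i j => ?_⟩ <;>
      fin_cases i <;> fin_cases j <;> norm_num [T1, T2]
  | one =>
    refine ⟨Matrix.det_one, fun i j => ?_⟩
    rw [Matrix.one_apply]
    split <;> norm_num
  | mul x y _ _ ihx ihy =>
    refine ⟨by rw [Matrix.det_mul, ihx.1, ihy.1, mul_one], fun i j => ?_⟩
    rw [Matrix.mul_apply, Fin.sum_univ_two]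
    exact add_nonneg (mul_nonneg (ihx.2 i 0) (ihy.2 0 j)) (mul_nonneg (ihx.2 i 1) (ihy.2 1 j))

lemma G_DS {χ : Monoid.End F2} (hχ : χ ∈ Gkappa) :
    (inducedMatrix χ).det = 1 ∧ ∀ i j, 0 ≤ inducedMatrix χ i j :=
  closure_sub_DS (imh_mem_closure hχ)

lemma detP {χ : Monoid.End F2} (hχ : χ ∈ Gkappa) :
    inducedMatrix χ 0 0 * inducedMatrix χ 1 1 - inducedMatrix χ 0 1 * inducedMatrix χ 1 0 = 1 := by
  rw [← Matrix.det_fin_two]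
  exact (G_DS hχ).1

lemma inj_aux : ∀ (n : ℕ) (φ ψ : Monoid.End F2), φ ∈ Gkappa → ψ ∈ Gkappa →
    inducedMatrix φ = inducedMatrix ψ →
    (inducedMatrix φ 0 0 + inducedMatrix φ 0 1 + inducedMatrix φ 1 0
      + inducedMatrix φ 1 1).toNat = n →
    φ = ψ := by
  intro n
  induction n using Nat.strong_induction_on with
  | _ n ih =>
  intro φ ψ hφ hψ hM hn
  rcases slem hφ with rfl | ⟨φ₁, hφ₁, rfl, -⟩ | ⟨φ₁, hφ₁, rfl, -⟩ <;>
    rcases slem hψ with rfl | ⟨ψ₁, hψ₁, rfl, -⟩ | ⟨ψ₁, hψ₁, rfl, -⟩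
  · rfl
  · -- 1 = ψ₁ * T1hat
    exfalso
    rw [ind_one, Matrix.one_fin_two, ind_mul, ind_T1hat, mul_T2m] at hM
    have e10 := entry_eq hM 1 0
    have e11 := entry_eq hM 1 1
    norm_num at e10 e11
    have n10 := (G_DS hψ₁).2 1 0
    omega
  · -- 1 = ψ₁ * T2hat
    exfalso
    rw [ind_one, Matrix.one_fin_two, ind_mul, ind_T2hat, mul_T1m] at hM
    have e00 := entry_eq hM 0 0
    have e01 := entry_eq hM 0 1
    norm_num at e00 e01
    have n01 := (G_DS hψ₁).2 0 1
    omega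
  · -- φ₁ * T1hat = 1
    exfalso
    rw [ind_one, Matrix.one_fin_two, ind_mul, ind_T1hat, mul_T2m] at hM
    have e10 := entry_eq hM 1 0
    have e11 := entry_eq hM 1 1
    norm_num at e10 e11
    have n10 := (G_DS hφ₁).2 1 0
    omega
  · -- T1/T1
    rw [ind_mul, ind_T1hat, mul_T2m, ind_mul (ψ₁), ind_T1hat, mul_T2m] at hM
    have e00 := entry_eq hM 0 0
    have e01 := entry_eq hM 0 1
    have e10 := entry_eq hM 1 0
    have e11 := entry_eq hM 1 1
    norm_num at e00 e01 e10 e11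
    have hPQ : inducedMatrix φ₁ = inducedMatrix ψ₁ := by
      rw [Matrix.eta_fin_two (inducedMatrix φ₁), Matrix.eta_fin_two (inducedMatrix ψ₁)]
      have q1 : inducedMatrix φ₁ 0 0 = inducedMatrix ψ₁ 0 0 := by omega
      have q2 : inducedMatrix φ₁ 1 0 = inducedMatrix ψ₁ 1 0 := by omega
      rw [q1, q2, e01, e11]
    have hd := detP hφ₁
    have hne : ¬(inducedMatrix φ₁ 0 1 = 0 ∧ inducedMatrix φ₁ 1 1 = 0) := by
      rintro ⟨z1, z2⟩
      rw [z1, z2] at hd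
      simp at hd
    have hnn := (G_DS hφ₁).2
    have n00 := hnn 0 0
    have n01 := hnn 0 1
    have n10 := hnn 1 0
    have n11 := hnn 1 1
    have hlt : (inducedMatrix φ₁ 0 0 + inducedMatrix φ₁ 0 1 + inducedMatrix φ₁ 1 0
        + inducedMatrix φ₁ 1 1).toNat < n := by
      rw [← hn]
      rw [ind_mul, ind_T1hat, mul_T2m]
      norm_num
      omega
    rw [ih _ hlt φ₁ ψ₁ hφ₁ hψ₁ hPQ rfl]
  · -- T1/T2 mixed
    exfalso
    rw [ind_mul, ind_T1hat, mul_T2m, ind_mul (ψ₁), ind_T2hat, mul_T1m] at hM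
    have e00 := entry_eq hM 0 0
    have e01 := entry_eq hM 0 1
    have e10 := entry_eq hM 1 0
    have e11 := entry_eq hM 1 1
    norm_num at e00 e01 e10 e11
    have hnnP := (G_DS hφ₁).2
    have hnnQ := (G_DS hψ₁).2
    have n00 := hnnP 0 0
    have n10 := hnnP 1 0
    have m01 := hnnQ 0 1
    have m11 := hnnQ 1 1
    have z00 : inducedMatrix φ₁ 0 0 = 0 := by omega
    have z10 : inducedMatrix φ₁ 1 0 = 0 := by omega
    have hd := detP hφ₁
    rw [z00, z10] at hd
    simp at hd
  · -- φ₁ * T2hat = 1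
    exfalso
    rw [ind_one, Matrix.one_fin_two, ind_mul, ind_T2hat, mul_T1m] at hM
    have e00 := entry_eq hM 0 0
    have e01 := entry_eq hM 0 1
    norm_num at e00 e01
    have n01 := (G_DS hφ₁).2 0 1
    omega
  · -- T2/T1 mixed
    exfalso
    rw [ind_mul, ind_T2hat, mul_T1m, ind_mul (ψ₁), ind_T1hat, mul_T2m] at hM
    have e00 := entry_eq hM 0 0
    have e01 := entry_eq hM 0 1
    have e10 := entry_eq hM 1 0
    have e11 := entry_eq hM 1 1
    norm_num at e00 e01 e10 e11
    have hnnP := (G_DS hφ₁).2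
    have hnnQ := (G_DS hψ₁).2
    have n00 := hnnQ 0 0
    have n10 := hnnQ 1 0
    have m01 := hnnP 0 1
    have m11 := hnnP 1 1
    have z00 : inducedMatrix ψ₁ 0 0 = 0 := by omega
    have z10 : inducedMatrix ψ₁ 1 0 = 0 := by omega
    have hd := detP hψ₁
    rw [z00, z10] at hd
    simp at hd
  · -- T2/T2
    rw [ind_mul, ind_T2hat, mul_T1m, ind_mul (ψ₁), ind_T2hat, mul_T1m] at hM
    have e00 := entry_eq hM 0 0
    have e01 := entry_eq hM 0 1
    have e10 := entry_eq hM 1 0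
    have e11 := entry_eq hM 1 1
    norm_num at e00 e01 e10 e11
    have hPQ : inducedMatrix φ₁ = inducedMatrix ψ₁ := by
      rw [Matrix.eta_fin_two (inducedMatrix φ₁), Matrix.eta_fin_two (inducedMatrix ψ₁)]
      have q1 : inducedMatrix φ₁ 0 1 = inducedMatrix ψ₁ 0 1 := by omega
      have q2 : inducedMatrix φ₁ 1 1 = inducedMatrix ψ₁ 1 1 := by omega
      rw [q1, q2, e00, e10]
    have hd := detP hφ₁
    have hne : ¬(inducedMatrix φ₁ 0 0 = 0 ∧ inducedMatrix φ₁ 1 0 = 0) := by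
      rintro ⟨z1, z2⟩
      rw [z1, z2] at hd
      simp at hd
    have hnn := (G_DS hφ₁).2
    have n00 := hnn 0 0
    have n01 := hnn 0 1
    have n10 := hnn 1 0
    have n11 := hnn 1 1
    have hlt : (inducedMatrix φ₁ 0 0 + inducedMatrix φ₁ 0 1 + inducedMatrix φ₁ 1 0
        + inducedMatrix φ₁ 1 1).toNat < n := by
      rw [← hn]
      rw [ind_mul, ind_T2hat, mul_T1m]
      norm_num
      omega
    rw [ih _ hlt φ₁ ψ₁ hφ₁ hψ₁ hPQ rfl]

lemma closure_sub_image : ∀ M ∈ Submonoid.closure ({T1, T2} : Set (Matrix (Fin 2) (Fin 2) ℤ)),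
    ∃ φ ∈ Gkappa, inducedMatrix φ = M := by
  intro M h
  induction h using Submonoid.closure_induction with
  | mem y hy =>
    rcases hy with rfl | rfl
    · exact ⟨T2hat, T2hat_mem, ind_T2hat⟩
    · exact ⟨T1hat, T1hat_mem, ind_T1hat⟩
  | one => exact ⟨1, one_mem_G, ind_one⟩
  | mul x y _ _ ihx ihy =>
    obtain ⟨φ, hφ, rfl⟩ := ihx
    obtain ⟨ψ, hψ, rfl⟩ := ihy
    exact ⟨φ * ψ, Gmul hφ hψ, ind_mul φ ψ⟩

end Aux

/-- `G_κ` is a submonoid of `End(F₂)`, and `φ ↦ inducedMatrix φ` is a monoid isomorphism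
from `G_κ` onto the monoid of 2×2 integer matrices with determinant 1 and nonnegative
entries: it is multiplicative, injective on `G_κ`, has image exactly the determinant-1
nonnegative matrices, and sends `T̂₁` and `T̂₂` to the two free generators `T₂`, `T₁` of
that matrix monoid. -/
theorem Gkappa_isomorphic_unimodular_nonneg_matrices :
    (1 : Monoid.End F2) ∈ Gkappa ∧
    (∀ φ ∈ Gkappa, ∀ ψ ∈ Gkappa, φ * ψ ∈ Gkappa) ∧
    (∀ φ ∈ Gkappa, ∀ ψ ∈ Gkappa,
      inducedMatrix (φ * ψ) = inducedMatrix φ * inducedMatrix ψ) ∧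
    Set.InjOn inducedMatrix Gkappa ∧
    inducedMatrix '' Gkappa =
      {M : Matrix (Fin 2) (Fin 2) ℤ | M.det = 1 ∧ ∀ i j, 0 ≤ M i j} ∧
    ({inducedMatrix T1hat, inducedMatrix T2hat} : Set (Matrix (Fin 2) (Fin 2) ℤ)) =
      {T1, T2} := by
  refine ⟨Aux.one_mem_G, fun φ hφ ψ hψ => Aux.Gmul hφ hψ,
    fun φ _ ψ _ => Aux.ind_mul φ ψ, ?_, ?_, ?_⟩
  · intro φ hφ ψ hψ h
    exact Aux.inj_aux _ φ ψ hφ hψ h rfl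
  · apply Set.Subset.antisymm
    · rintro M ⟨φ, hφ, rfl⟩
      exact ⟨(Aux.G_DS hφ).1, (Aux.G_DS hφ).2⟩
    · intro M hM
      obtain ⟨φ, hφ, heq⟩ :=
        Aux.closure_sub_image M (Aux.mat_descent _ M hM.1 hM.2 rfl)
      exact ⟨φ, hφ, heq⟩
  · rw [Aux.ind_T1hat, Aux.ind_T2hat]
    exact Set.pair_comm _ _
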